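/- (Harnack-type inequality for crossing minimizers) Let x, y be two solutions of the variational monotone recurrence relation with strong twist and uniform bound K on second derivatives. Set α_i = max(y_i - x_i, 0), β_i = min(y_i - x_i, 0). Then for every index i with β_i = 0: (Σ_{j=i-r}^{i} + Σ_{j=i}^{i+r})(-β_j) ≤ (K/λ) (Σ_{j=i-r}^{i} + Σ_{j=i}^{i+r}) α_j, and symmetrically for every i with α_i = 0: (Σ_{j=i-r}^{i} + Σ_{j=i}^{i+r}) α_j ≤ (K/λ)(Σ_{j=i-r}^{i} + Σ_{j=i}^{i+r})(-β_j). -/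

import Mathlib

open Finset Filter Topology

noncomputable def d1 (f : ℝ → ℝ → ℝ) (ν μ : ℝ) : ℝ := deriv (fun t => f t μ) ν
noncomputable def d2 (f : ℝ → ℝ → ℝ) (ν μ : ℝ) : ℝ := deriv (fun t => f ν t) μ
noncomputable def d11 (f : ℝ → ℝ → ℝ) (ν μ : ℝ) : ℝ := deriv (fun t => d1 f t μ) ν
noncomputable def d12 (f : ℝ → ℝ → ℝ) (ν μ : ℝ) : ℝ := deriv (fun t => d2 f t μ) ν
noncomputable def d22 (f : ℝ → ℝ → ℝ) (ν μ : ℝ) : ℝ := deriv (fun t => d2 f ν t) μ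

/-- The local energy at site `i` of the sequence `z`:  `S_i(z) = ∑_{j=1}^r f_j(z_i, z_{i+j})`. -/
noncomputable def siteE (r : ℕ) (f : ℕ → ℝ → ℝ → ℝ) (z : ℤ → ℝ) (i : ℤ) : ℝ :=
  ∑ j ∈ Finset.Icc 1 r, f j (z i) (z (i + j))

/-- `W_B` for the segment `B = [a,b] ⊂ ℤ`. -/
noncomputable def Wseg (r : ℕ) (f : ℕ → ℝ → ℝ → ℝ) (a b : ℤ) (z : ℤ → ℝ) : ℝ :=
  ∑ i ∈ Finset.Icc a b, siteE r f z i

/-- A global minimizer: for every segment with interior `[a,b]` and every variation `v`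
supported in `[a,b]`, the energy does not decrease. -/
def IsGlobalMin (r : ℕ) (f : ℕ → ℝ → ℝ → ℝ) (x : ℤ → ℝ) : Prop :=
  ∀ a b : ℤ, ∀ v : ℤ → ℝ, (∀ i, v i ≠ 0 → i ∈ Finset.Icc a b) →
    Wseg r f (a - r) b x ≤ Wseg r f (a - r) b (x + v)

/-- The variational monotone recurrence relation `∑_{j=i-r}^{i} ∂_i S_j(x) = 0` at site `i`. -/
def SolvesEL (r : ℕ) (f : ℕ → ℝ → ℝ → ℝ) (x : ℤ → ℝ) (i : ℤ) : Prop :=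
  (∑ j ∈ Finset.Icc 1 r, (d1 (f j) (x i) (x (i + j)) + d2 (f j) (x (i - j)) (x i))) = 0

/-- A local energy of range `r` in the sense of Definition 1.5 of the paper. -/
structure LocalEnergy (r : ℕ) (K lam : ℝ) where
  f : ℕ → ℝ → ℝ → ℝ
  smooth : ∀ j, ContDiff ℝ 2 (fun p : ℝ × ℝ => f j p.1 p.2)
  periodic : ∀ j ν μ, f j (ν + 1) (μ + 1) = f j ν μ
  bound11 : ∀ j ν μ, |d11 (f j) ν μ| ≤ K / r
  bound12 : ∀ j ν μ, |d12 (f j) ν μ| ≤ K / r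
  bound22 : ∀ j ν μ, |d22 (f j) ν μ| ≤ K / r
  coercive : ∀ j ∈ Finset.Icc 1 r, ∀ C : ℝ, ∃ R : ℝ, ∀ ν μ : ℝ, R ≤ |ν - μ| → C ≤ f j ν μ
  twist : ∀ j ∈ Finset.Icc 1 r, ∀ ν μ : ℝ, d12 (f j) ν μ ≤ -lam

/-- `x` and `y` are weakly ordered on the set `s`. -/
def WOrd (x y : ℤ → ℝ) (s : Set ℤ) : Prop :=
  (∀ i ∈ s, x i ≤ y i) ∨ (∀ i ∈ s, y i ≤ x i)

/-- `D` is an interval outside of which (on both components of the complement)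
`x` and `y` are weakly ordered. -/
def CrossProp (x y : ℤ → ℝ) (D : Set ℤ) : Prop :=
  D.OrdConnected ∧ WOrd x y {i | ∀ j ∈ D, i < j} ∧ WOrd x y {i | ∀ j ∈ D, j < i}

/-- The domain of crossing of `x` and `y`: the minimal interval `D` such that `x` and `y`
are weakly ordered on the connected components of its complement. -/
def IsCrossingDomain (x y : ℤ → ℝ) (D : Set ℤ) : Prop :=
  CrossProp x y D ∧ ∀ D' : Set ℤ, CrossProp x y D' → D ⊆ D'

/-- The translation `(τ_{k,l} x)_i = x_{i-k} + l`. -/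
def transl (k l : ℤ) (x : ℤ → ℝ) : ℤ → ℝ := fun i => x (i - k) + l

/-- The Birkhoff property. -/
def Birkhoff (x : ℤ → ℝ) : Prop :=
  ∀ k l : ℤ, (∀ i, transl k l x i ≤ x i) ∨ (∀ i, x i ≤ transl k l x i)

section Aux

variable {f : ℝ → ℝ → ℝ}

lemma derivs_of_contDiff (hf : ContDiff ℝ 2 (fun p : ℝ × ℝ => f p.1 p.2)) :
    (∀ ν μ : ℝ, HasDerivAt (fun t => d1 f t μ) (d11 f ν μ) ν) ∧
    (∀ ν μ : ℝ, HasDerivAt (fun t => d2 f t μ) (d12 f ν μ) ν) ∧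
    (∀ ν μ : ℝ, HasDerivAt (fun t => d1 f ν t) (d12 f ν μ) μ) ∧
    (∀ ν μ : ℝ, HasDerivAt (fun t => d2 f ν t) (d22 f ν μ) μ) := by
  have hF1 : Differentiable ℝ (fun p : ℝ × ℝ => f p.1 p.2) := hf.differentiable (by norm_num)
  have hD : Differentiable ℝ (fderiv ℝ (fun p : ℝ × ℝ => f p.1 p.2)) :=
    (hf.fderiv_right (m := 1) (by norm_num)).differentiable one_ne_zero
  have hcurve1 : ∀ (μ ν : ℝ), HasDerivAt (fun t : ℝ => (t, μ)) ((1:ℝ), (0:ℝ)) ν :=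
    fun μ ν => HasDerivAt.prodMk (hasDerivAt_id' (x := ν)) (hasDerivAt_const ν μ)
  have hcurve2 : ∀ (ν μ : ℝ), HasDerivAt (fun t : ℝ => (ν, t)) ((0:ℝ), (1:ℝ)) μ :=
    fun ν μ => HasDerivAt.prodMk (hasDerivAt_const μ ν) (hasDerivAt_id' (x := μ))
  have hd1 : ∀ ν μ : ℝ, d1 f ν μ = fderiv ℝ (fun p : ℝ × ℝ => f p.1 p.2) (ν, μ) (1, 0) := by
    intro ν μ
    exact ((hF1 (ν, μ)).hasFDerivAt.comp_hasDerivAt ν (hcurve1 μ ν)).deriv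
  have hd2 : ∀ ν μ : ℝ, d2 f ν μ = fderiv ℝ (fun p : ℝ × ℝ => f p.1 p.2) (ν, μ) (0, 1) := by
    intro ν μ
    exact ((hF1 (ν, μ)).hasFDerivAt.comp_hasDerivAt μ (hcurve2 ν μ)).deriv
  have hDD1 : ∀ (ν μ : ℝ) (c : ℝ × ℝ),
      HasDerivAt (fun t => fderiv ℝ (fun p : ℝ × ℝ => f p.1 p.2) (t, μ) c)
        (fderiv ℝ (fderiv ℝ (fun p : ℝ × ℝ => f p.1 p.2)) (ν, μ) (1, 0) c) ν := by
    intro ν μ c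
    have h2 := (hD (ν, μ)).hasFDerivAt.comp_hasDerivAt ν (hcurve1 μ ν)
    simpa using h2.clm_apply (hasDerivAt_const ν c)
  have hDD2 : ∀ (ν μ : ℝ) (c : ℝ × ℝ),
      HasDerivAt (fun t => fderiv ℝ (fun p : ℝ × ℝ => f p.1 p.2) (ν, t) c)
        (fderiv ℝ (fderiv ℝ (fun p : ℝ × ℝ => f p.1 p.2)) (ν, μ) (0, 1) c) μ := by
    intro ν μ c
    have h2 := (hD (ν, μ)).hasFDerivAt.comp_hasDerivAt μ (hcurve2 ν μ)
    simpa using h2.clm_apply (hasDerivAt_const μ c)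
  have e1 : ∀ μ : ℝ, (fun t => d1 f t μ)
      = (fun t => fderiv ℝ (fun p : ℝ × ℝ => f p.1 p.2) (t, μ) (1, 0)) :=
    fun μ => funext fun t => hd1 t μ
  have e2 : ∀ μ : ℝ, (fun t => d2 f t μ)
      = (fun t => fderiv ℝ (fun p : ℝ × ℝ => f p.1 p.2) (t, μ) (0, 1)) :=
    fun μ => funext fun t => hd2 t μ
  have e1' : ∀ ν : ℝ, (fun t => d1 f ν t)
      = (fun t => fderiv ℝ (fun p : ℝ × ℝ => f p.1 p.2) (ν, t) (1, 0)) :=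
    fun ν => funext fun t => hd1 ν t
  have e2' : ∀ ν : ℝ, (fun t => d2 f ν t)
      = (fun t => fderiv ℝ (fun p : ℝ × ℝ => f p.1 p.2) (ν, t) (0, 1)) :=
    fun ν => funext fun t => hd2 ν t
  have hd11 : ∀ ν μ : ℝ, d11 f ν μ
      = fderiv ℝ (fderiv ℝ (fun p : ℝ × ℝ => f p.1 p.2)) (ν, μ) (1, 0) (1, 0) := by
    intro ν μ
    have := (hDD1 ν μ (1, 0)).deriv
    rw [← e1 μ] at this
    exact this
  have hd12 : ∀ ν μ : ℝ, d12 f ν μ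
      = fderiv ℝ (fderiv ℝ (fun p : ℝ × ℝ => f p.1 p.2)) (ν, μ) (1, 0) (0, 1) := by
    intro ν μ
    have := (hDD1 ν μ (0, 1)).deriv
    rw [← e2 μ] at this
    exact this
  have hd22 : ∀ ν μ : ℝ, d22 f ν μ
      = fderiv ℝ (fderiv ℝ (fun p : ℝ × ℝ => f p.1 p.2)) (ν, μ) (0, 1) (0, 1) := by
    intro ν μ
    have := (hDD2 ν μ (0, 1)).deriv
    rw [← e2' ν] at this
    exact this
  have hsymm : ∀ ν μ : ℝ,
      fderiv ℝ (fderiv ℝ (fun p : ℝ × ℝ => f p.1 p.2)) (ν, μ) (0, 1) (1, 0)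
      = fderiv ℝ (fderiv ℝ (fun p : ℝ × ℝ => f p.1 p.2)) (ν, μ) (1, 0) (0, 1) :=
    fun ν μ => second_derivative_symmetric (fun y => (hF1 y).hasFDerivAt)
      (hD (ν, μ)).hasFDerivAt _ _
  refine ⟨fun ν μ => ?_, fun ν μ => ?_, fun ν μ => ?_, fun ν μ => ?_⟩
  · rw [hd11 ν μ, e1 μ]; exact hDD1 ν μ (1, 0)
  · rw [hd12 ν μ, e2 μ]; exact hDD1 ν μ (0, 1)
  · rw [hd12 ν μ, ← hsymm ν μ, e1' ν]; exact hDD2 ν μ (1, 0)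
  · rw [hd22 ν μ, e2' ν]; exact hDD2 ν μ (0, 1)

end Aux
lemma mvt_exists (g g' : ℝ → ℝ) (h : ∀ t, HasDerivAt g (g' t) t) (a b : ℝ) :
    ∃ c, g b - g a = g' c * (b - a) := by
  rcases lt_trichotomy a b with hab | rfl | hab
  · obtain ⟨c, _, hc⟩ := exists_hasDerivAt_eq_slope g g' hab
      (fun t _ => (h t).continuousAt.continuousWithinAt) (fun t _ => h t)
    refine ⟨c, ?_⟩
    rw [hc, div_mul_cancel₀]
    exact sub_ne_zero.2 hab.ne'
  · exact ⟨a, by ring⟩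
  · obtain ⟨c, _, hc⟩ := exists_hasDerivAt_eq_slope g g' hab
      (fun t _ => (h t).continuousAt.continuousWithinAt) (fun t _ => h t)
    refine ⟨c, ?_⟩
    have hne : a - b ≠ 0 := sub_ne_zero.2 hab.ne'
    rw [hc]
    field_simp
    ring

section Diff
variable {f : ℝ → ℝ → ℝ}

lemma diff_d1 (hf : ContDiff ℝ 2 (fun p : ℝ × ℝ => f p.1 p.2)) (a1 a2 b1 b2 : ℝ) :
    ∃ p q : ℝ × ℝ, d1 f b1 b2 - d1 f a1 a2 =
      d11 f p.1 p.2 * (b1 - a1) + d12 f q.1 q.2 * (b2 - a2) := by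
  obtain ⟨h11, _, h12, _⟩ := derivs_of_contDiff hf
  obtain ⟨c, hc⟩ := mvt_exists (fun t => d1 f t b2) (fun t => d11 f t b2)
    (fun t => h11 t b2) a1 b1
  obtain ⟨c', hc'⟩ := mvt_exists (fun t => d1 f a1 t) (fun t => d12 f a1 t)
    (fun t => h12 a1 t) a2 b2
  refine ⟨(c, b2), (a1, c'), ?_⟩
  linarith

lemma diff_d2 (hf : ContDiff ℝ 2 (fun p : ℝ × ℝ => f p.1 p.2)) (a1 a2 b1 b2 : ℝ) :
    ∃ p q : ℝ × ℝ, d2 f b1 b2 - d2 f a1 a2 =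
      d12 f p.1 p.2 * (b1 - a1) + d22 f q.1 q.2 * (b2 - a2) := by
  obtain ⟨_, h21, _, h22⟩ := derivs_of_contDiff hf
  obtain ⟨c, hc⟩ := mvt_exists (fun t => d2 f t b2) (fun t => d12 f t b2)
    (fun t => h21 t b2) a1 b1
  obtain ⟨c', hc'⟩ := mvt_exists (fun t => d2 f a1 t) (fun t => d22 f a1 t)
    (fun t => h22 a1 t) a2 b2
  refine ⟨(c, b2), (a1, c'), ?_⟩
  linarith

end Diff

lemma sum_Icc_sub_eq (g : ℤ → ℝ) (i : ℤ) (r : ℕ) :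
    ∑ k ∈ Finset.Icc (i - (r : ℤ)) i, g k = g i + ∑ j ∈ Finset.Icc 1 r, g (i - (j : ℤ)) := by
  induction r with
  | zero => simp
  | succ n ih =>
    have h1 : Finset.Icc (i - ((n + 1 : ℕ) : ℤ)) i
        = insert (i - ((n + 1 : ℕ) : ℤ)) (Finset.Icc (i - (n : ℤ)) i) := by
      ext k; simp only [Finset.mem_Icc, Finset.mem_insert]; push_cast; omega
    have h2 : Finset.Icc 1 (n + 1) = insert (n + 1) (Finset.Icc 1 n) := by
      ext k; simp only [Finset.mem_Icc, Finset.mem_insert]; omega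
    rw [h1, Finset.sum_insert (by simp only [Finset.mem_Icc]; push_cast; omega),
      h2, Finset.sum_insert (by simp), ih]
    push_cast
    ring

lemma sum_Icc_add_eq (g : ℤ → ℝ) (i : ℤ) (r : ℕ) :
    ∑ k ∈ Finset.Icc i (i + (r : ℤ)), g k = g i + ∑ j ∈ Finset.Icc 1 r, g (i + (j : ℤ)) := by
  induction r with
  | zero => simp
  | succ n ih =>
    have h1 : Finset.Icc i (i + ((n + 1 : ℕ) : ℤ))
        = insert (i + ((n + 1 : ℕ) : ℤ)) (Finset.Icc i (i + (n : ℤ))) := by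
      ext k; simp only [Finset.mem_Icc, Finset.mem_insert]; push_cast; omega
    have h2 : Finset.Icc 1 (n + 1) = insert (n + 1) (Finset.Icc 1 n) := by
      ext k; simp only [Finset.mem_Icc, Finset.mem_insert]; omega
    rw [h1, Finset.sum_insert (by simp only [Finset.mem_Icc]; push_cast; omega),
      h2, Finset.sum_insert (by simp), ih]
    push_cast
    ring

lemma key_harnack (r : ℕ) (hr : 1 ≤ r) (K lam : ℝ) (hK : 0 < K) (hlam : 0 < lam)
    (E : LocalEnergy r K lam) (x y : ℤ → ℝ)
    (hELx : ∀ i : ℤ, SolvesEL r E.f x i) (hELy : ∀ i : ℤ, SolvesEL r E.f y i)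
    (z A B : ℤ → ℝ) (hz : ∀ k, z k = y k - x k)
    (hA : ∀ k, A k = max (z k) 0) (hB : ∀ k, B k = -(min (z k) 0))
    (i : ℤ) (hi : 0 ≤ z i) :
    (∑ j ∈ Finset.Icc (i - (r : ℤ)) i, B j) + ∑ j ∈ Finset.Icc i (i + (r : ℤ)), B j ≤
      K / lam * ((∑ j ∈ Finset.Icc (i - (r : ℤ)) i, A j)
        + ∑ j ∈ Finset.Icc i (i + (r : ℤ)), A j) := by
  classical
  have hr1 : (1 : ℝ) ≤ (r : ℝ) := by exact_mod_cast hr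
  have hr0 : (0 : ℝ) < (r : ℝ) := lt_of_lt_of_le one_pos hr1
  have hA0 : ∀ k, 0 ≤ A k := fun k => by rw [hA k]; exact le_max_right _ _
  have hB0 : ∀ k, 0 ≤ B k := fun k => by rw [hB k]; exact neg_nonneg.2 (min_le_right _ _)
  have hzk : ∀ k, z k = A k - B k := fun k => by
    rw [hA k, hB k]; have := max_add_min (z k) 0; linarith
  have hAi : A i = z i := by rw [hA i]; exact max_eq_left hi
  have hBi : B i = 0 := by rw [hB i, min_eq_right hi, neg_zero]
  -- coefficients from the mean value theorem
  have hcoef : ∀ j : ℕ, ∃ aa bb cc ee : ℝ,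
      |aa| ≤ K / r ∧ |bb| ≤ K / r ∧ |cc| ≤ K / r ∧ |ee| ≤ K / r ∧
      (j ∈ Finset.Icc 1 r → bb ≤ -lam ∧ cc ≤ -lam) ∧
      (d1 (E.f j) (y i) (y (i + (j : ℤ))) + d2 (E.f j) (y (i - (j : ℤ))) (y i))
        - (d1 (E.f j) (x i) (x (i + (j : ℤ))) + d2 (E.f j) (x (i - (j : ℤ))) (x i))
        = aa * z i + bb * z (i + (j : ℤ)) + cc * z (i - (j : ℤ)) + ee * z i := by
    intro j
    obtain ⟨p, q, hpq⟩ := diff_d1 (E.smooth j) (x i) (x (i + (j : ℤ))) (y i) (y (i + (j : ℤ)))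
    obtain ⟨p', q', hpq'⟩ := diff_d2 (E.smooth j) (x (i - (j : ℤ))) (x i) (y (i - (j : ℤ))) (y i)
    refine ⟨d11 (E.f j) p.1 p.2, d12 (E.f j) q.1 q.2, d12 (E.f j) p'.1 p'.2,
      d22 (E.f j) q'.1 q'.2, E.bound11 j _ _, E.bound12 j _ _, E.bound12 j _ _,
      E.bound22 j _ _, fun hj => ⟨E.twist j hj _ _, E.twist j hj _ _⟩, ?_⟩
    rw [hz, hz, hz]
    linarith
  choose a b c e ha hb hc he htw hident using hcoef
  -- the summed Euler-Lagrange identity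
  have hsum0 : ∑ j ∈ Finset.Icc 1 r,
      (a j * z i + b j * z (i + (j : ℤ)) + c j * z (i - (j : ℤ)) + e j * z i) = 0 := by
    have h1 := hELx i; have h2 := hELy i
    unfold SolvesEL at h1 h2
    calc ∑ j ∈ Finset.Icc 1 r,
        (a j * z i + b j * z (i + (j : ℤ)) + c j * z (i - (j : ℤ)) + e j * z i)
        = ∑ j ∈ Finset.Icc 1 r,
          ((d1 (E.f j) (y i) (y (i + (j : ℤ))) + d2 (E.f j) (y (i - (j : ℤ))) (y i))
            - (d1 (E.f j) (x i) (x (i + (j : ℤ))) + d2 (E.f j) (x (i - (j : ℤ))) (x i))) :=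
        Finset.sum_congr rfl fun j _ => (hident j).symm
      _ = 0 := by rw [Finset.sum_sub_distrib, h2, h1, sub_zero]
  -- step 1 : lower bound by the twist
  have step1 : lam * ((∑ j ∈ Finset.Icc 1 r, B (i - (j : ℤ)))
      + ∑ j ∈ Finset.Icc 1 r, B (i + (j : ℤ)))
      ≤ ∑ j ∈ Finset.Icc 1 r, ((-(b j)) * B (i + (j : ℤ)) + (-(c j)) * B (i - (j : ℤ))) := by
    rw [mul_add, Finset.mul_sum, Finset.mul_sum, ← Finset.sum_add_distrib]
    apply Finset.sum_le_sum
    intro j hj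
    have h1 : lam ≤ -(b j) := by have := (htw j hj).1; linarith
    have h2 : lam ≤ -(c j) := by have := (htw j hj).2; linarith
    have e1 := mul_le_mul_of_nonneg_right h1 (hB0 (i + (j : ℤ)))
    have e2 := mul_le_mul_of_nonneg_right h2 (hB0 (i - (j : ℤ)))
    linarith
  -- step 2 : rewrite using the EL identity
  have step2 : ∑ j ∈ Finset.Icc 1 r, ((-(b j)) * B (i + (j : ℤ)) + (-(c j)) * B (i - (j : ℤ)))
      = ∑ j ∈ Finset.Icc 1 r, ((-(b j)) * A (i + (j : ℤ)) + (-(c j)) * A (i - (j : ℤ))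
          - (a j + e j) * z i) := by
    rw [← sub_eq_zero, ← Finset.sum_sub_distrib, ← hsum0]
    apply Finset.sum_congr rfl
    intro j _
    rw [hzk (i + (j : ℤ)), hzk (i - (j : ℤ))]
    ring
  -- step 3 : upper bound each term
  have step3 : ∑ j ∈ Finset.Icc 1 r, ((-(b j)) * A (i + (j : ℤ)) + (-(c j)) * A (i - (j : ℤ))
        - (a j + e j) * z i)
      ≤ ∑ j ∈ Finset.Icc 1 r, (K / r * A (i + (j : ℤ)) + K / r * A (i - (j : ℤ))
        + 2 * (K / r) * A i) := by
    apply Finset.sum_le_sum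
    intro j _
    have hb1 : -(b j) ≤ K / r := by have := abs_le.1 (hb j); linarith
    have hc1 : -(c j) ≤ K / r := by have := abs_le.1 (hc j); linarith
    have e1 := mul_le_mul_of_nonneg_right hb1 (hA0 (i + (j : ℤ)))
    have e2 := mul_le_mul_of_nonneg_right hc1 (hA0 (i - (j : ℤ)))
    have h3 : -(a j + e j) ≤ 2 * (K / r) := by
      have := abs_le.1 (ha j); have := abs_le.1 (he j); linarith
    have e3 : -(a j + e j) * z i ≤ 2 * (K / r) * z i :=
      mul_le_mul_of_nonneg_right h3 hi
    rw [hAi]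
    linarith
  -- step 4 : compute the constant sum
  have hcard : (Finset.Icc 1 r).card = r := by rw [Nat.card_Icc]; omega
  have step4 : ∑ j ∈ Finset.Icc 1 r, (K / r * A (i + (j : ℤ)) + K / r * A (i - (j : ℤ))
        + 2 * (K / r) * A i)
      = K / r * (∑ j ∈ Finset.Icc 1 r, A (i + (j : ℤ)))
        + K / r * (∑ j ∈ Finset.Icc 1 r, A (i - (j : ℤ))) + 2 * K * A i := by
    rw [Finset.sum_add_distrib, Finset.sum_add_distrib, ← Finset.mul_sum, ← Finset.mul_sum,
      Finset.sum_const, hcard, nsmul_eq_mul]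
    have : (r : ℝ) * (2 * (K / r) * A i) = 2 * K * A i := by
      field_simp
    rw [this]
  -- step 5 : K / r ≤ K
  have hKr : K / r ≤ K := div_le_self hK.le hr1
  have hT1 : 0 ≤ ∑ j ∈ Finset.Icc 1 r, A (i + (j : ℤ)) :=
    Finset.sum_nonneg fun j _ => hA0 _
  have hT2 : 0 ≤ ∑ j ∈ Finset.Icc 1 r, A (i - (j : ℤ)) :=
    Finset.sum_nonneg fun j _ => hA0 _
  have step5a : K / r * (∑ j ∈ Finset.Icc 1 r, A (i + (j : ℤ)))
      ≤ K * (∑ j ∈ Finset.Icc 1 r, A (i + (j : ℤ))) := mul_le_mul_of_nonneg_right hKr hT1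
  have step5b : K / r * (∑ j ∈ Finset.Icc 1 r, A (i - (j : ℤ)))
      ≤ K * (∑ j ∈ Finset.Icc 1 r, A (i - (j : ℤ))) := mul_le_mul_of_nonneg_right hKr hT2
  -- combine
  have hmain : lam * ((∑ j ∈ Finset.Icc 1 r, B (i - (j : ℤ)))
      + ∑ j ∈ Finset.Icc 1 r, B (i + (j : ℤ)))
      ≤ K * ((∑ j ∈ Finset.Icc 1 r, A (i - (j : ℤ)))
        + (∑ j ∈ Finset.Icc 1 r, A (i + (j : ℤ))) + 2 * A i) := by
    have := step1
    rw [step2] at this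
    have h4 := step3
    rw [step4] at h4
    nlinarith [this, h4, step5a, step5b]
  -- conclude
  rw [sum_Icc_sub_eq B i r, sum_Icc_add_eq B i r, sum_Icc_sub_eq A i r, sum_Icc_add_eq A i r,
    hBi]
  have hfac : (A i + ∑ j ∈ Finset.Icc 1 r, A (i - (j : ℤ)))
      + (A i + ∑ j ∈ Finset.Icc 1 r, A (i + (j : ℤ)))
      = (∑ j ∈ Finset.Icc 1 r, A (i - (j : ℤ)))
        + (∑ j ∈ Finset.Icc 1 r, A (i + (j : ℤ))) + 2 * A i := by ring
  rw [hfac, div_mul_eq_mul_div, le_div_iff₀ hlam]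
  nlinarith [hmain]

lemma max_eq_neg_min (s t : ℝ) (h : s = -t) : max t 0 = -(min s 0) := by
  subst h
  rcases le_total t 0 with ht | ht
  · rw [max_eq_right ht, min_eq_right (by linarith), neg_zero]
  · rw [max_eq_left ht, min_eq_left (by linarith), neg_neg]


/-- Harnack-type inequality for crossing solutions:  with `α_i = max(y_i - x_i, 0)` and
`β_i = min(y_i - x_i, 0)`, at every site where `β` (resp. `α`) vanishes, the local sum of
`-β` (resp. `α`) is controlled by `K/λ` times the local sum of `α` (resp. `-β`). -/
theorem stmt8 (r : ℕ) (hr : 1 ≤ r) (K lam : ℝ) (hK : 0 < K) (hlam : 0 < lam)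
    (E : LocalEnergy r K lam) (x y : ℤ → ℝ)
    (hELx : ∀ i : ℤ, SolvesEL r E.f x i) (hELy : ∀ i : ℤ, SolvesEL r E.f y i)
    (α β : ℤ → ℝ)
    (hα : ∀ i, α i = max (y i - x i) 0) (hβ : ∀ i, β i = min (y i - x i) 0) :
    (∀ i : ℤ, β i = 0 →
      (∑ j ∈ Finset.Icc (i - r) i, (-β j)) + ∑ j ∈ Finset.Icc i (i + r), (-β j) ≤
        K / lam * ((∑ j ∈ Finset.Icc (i - r) i, α j) + ∑ j ∈ Finset.Icc i (i + r), α j)) ∧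
    (∀ i : ℤ, α i = 0 →
      (∑ j ∈ Finset.Icc (i - r) i, α j) + ∑ j ∈ Finset.Icc i (i + r), α j ≤
        K / lam * ((∑ j ∈ Finset.Icc (i - r) i, (-β j)) +
          ∑ j ∈ Finset.Icc i (i + r), (-β j))) := by
  constructor
  · intro i hiβ
    have h1 : min (y i - x i) 0 = 0 := by rw [← hβ i, hiβ]
    have hi : 0 ≤ y i - x i := by linarith [min_le_left (y i - x i) 0]
    simp only [hβ, hα]
    exact key_harnack r hr K lam hK hlam E x y hELx hELy (fun k => y k - x k)
      (fun k => max (y k - x k) 0) (fun k => -(min (y k - x k) 0))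
      (fun k => rfl) (fun k => rfl) (fun k => rfl) i hi
  · intro i hiα
    have h1 : max (y i - x i) 0 = 0 := by rw [← hα i, hiα]
    have hi : 0 ≤ x i - y i := by linarith [le_max_left (y i - x i) 0]
    simp only [hβ, hα]
    exact key_harnack r hr K lam hK hlam E y x hELy hELx (fun k => x k - y k)
      (fun k => -(min (y k - x k) 0)) (fun k => max (y k - x k) 0)
      (fun k => rfl)
      (fun k => (max_eq_neg_min (y k - x k) (x k - y k) (by ring)).symm)
      (fun k => max_eq_neg_min (x k - y k) (y k - x k) (by ring)) i hi
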